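/- Let D = (D_A, D_B, D_C) be a third almost-regular degree sequence for partite 3-uniform hypergraphs on vertex classes A, B, C. If D has a realization H, then D also has a realization H′ whose (A,B)-projection is B-balanced, and moreover H′ can be obtained from H by a finite series of switch operations. -/

import Mathlib

set_option linter.unusedSectionVars false
set_option maxHeartbeats 2000000


open Finset

variable {A B C : Type*} [Fintype A] [Fintype B] [Fintype C]
  [DecidableEq A] [DecidableEq B] [DecidableEq C]

/-- Degree of a vertex `a ∈ A` in a partite 3-uniform hypergraph with edge set `E`. -/
def hDegA (E : Finset (A × B × C)) (a : A) : ℕ := (E.filter fun e => e.1 = a).card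

/-- Degree of a vertex `b ∈ B`. -/
def hDegB (E : Finset (A × B × C)) (b : B) : ℕ := (E.filter fun e => e.2.1 = b).card

/-- Degree of a vertex `c ∈ C`. -/
def hDegC (E : Finset (A × B × C)) (c : C) : ℕ := (E.filter fun e => e.2.2 = c).card

/-- Multiplicity of the pair `(a,b)` in the `(A,B)`-projection of the hypergraph `E`,
i.e. the number of `c ∈ C` with `(a,b,c) ∈ E`. -/
def projAB (E : Finset (A × B × C)) (a : A) (b : B) : ℕ :=
  (E.filter fun e => e.1 = a ∧ e.2.1 = b).card

/-- The `(A,B)`-projection of `E` is `B`-balanced: for every `b ∈ B` there is an `l`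
such that every `a ∈ A` has either `l` or `l−1` parallel edges to `b`. -/
def BBalanced (E : Finset (A × B × C)) : Prop :=
  ∀ b : B, ∃ l : ℕ, ∀ a : A, projAB E a b = l ∨ projAB E a b + 1 = l

/-- A single switch operation (in any one of the three vertex classes): two hyperedges
are removed and two new hyperedges (not previously present) obtained by exchanging
their coordinates in one fixed class are added. -/
def IsSwitch (E E' : Finset (A × B × C)) : Prop :=
  (∃ a₁ a₂ b₁ c₁ b₂ c₂, (a₁, b₁, c₁) ∈ E ∧ (a₂, b₂, c₂) ∈ E ∧
    (a₂, b₁, c₁) ∉ E ∧ (a₁, b₂, c₂) ∉ E ∧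
    E' = insert (a₂, b₁, c₁) (insert (a₁, b₂, c₂)
      ((E.erase (a₁, b₁, c₁)).erase (a₂, b₂, c₂)))) ∨
  (∃ b₁ b₂ a₁ c₁ a₂ c₂, (a₁, b₁, c₁) ∈ E ∧ (a₂, b₂, c₂) ∈ E ∧
    (a₁, b₂, c₁) ∉ E ∧ (a₂, b₁, c₂) ∉ E ∧
    E' = insert (a₁, b₂, c₁) (insert (a₂, b₁, c₂)
      ((E.erase (a₁, b₁, c₁)).erase (a₂, b₂, c₂)))) ∨
  (∃ c₁ c₂ a₁ b₁ a₂ b₂, (a₁, b₁, c₁) ∈ E ∧ (a₂, b₂, c₂) ∈ E ∧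
    (a₁, b₁, c₂) ∉ E ∧ (a₂, b₂, c₁) ∉ E ∧
    E' = insert (a₁, b₁, c₂) (insert (a₂, b₂, c₁)
      ((E.erase (a₁, b₁, c₁)).erase (a₂, b₂, c₂))))

private lemma card_filter_insert' {X : Type*} [DecidableEq X] (s : Finset X) (p : X)
    (hp : p ∉ s) (P : X → Prop) [DecidablePred P] :
    ((insert p s).filter P).card = (s.filter P).card + if P p then 1 else 0 := by
  rw [filter_insert]
  split
  · rw [card_insert_of_notMem (fun h => hp (mem_of_mem_filter _ h))]
  · simp

private lemma card_filter_erase' {X : Type*} [DecidableEq X] (s : Finset X) (e : X)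
    (he : e ∈ s) (P : X → Prop) [DecidablePred P] :
    ((s.erase e).filter P).card + (if P e then 1 else 0) = (s.filter P).card := by
  rw [filter_erase]
  split
  · next h => rw [card_erase_add_one (mem_filter.mpr ⟨he, h⟩)]
  · next h => simp [erase_eq_of_notMem (fun hm => h (mem_filter.mp hm).2)]

private lemma card_filter_switch {X : Type*} [DecidableEq X] (E : Finset X)
    (e₁ e₂ p q : X) (he₁ : e₁ ∈ E) (he₂ : e₂ ∈ E) (hp : p ∉ E) (hq : q ∉ E)
    (h12 : e₁ ≠ e₂) (hpq : p ≠ q) (P : X → Prop) [DecidablePred P] :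
    ((insert p (insert q ((E.erase e₁).erase e₂))).filter P).card
      + (if P e₁ then 1 else 0) + (if P e₂ then 1 else 0)
      = (E.filter P).card + (if P p then 1 else 0) + (if P q then 1 else 0) := by
  have hq' : q ∉ (E.erase e₁).erase e₂ := fun h => hq (mem_of_mem_erase (mem_of_mem_erase h))
  have hp' : p ∉ insert q ((E.erase e₁).erase e₂) := by
    simp only [mem_insert]
    rintro (rfl | h)
    · exact hpq rfl
    · exact hp (mem_of_mem_erase (mem_of_mem_erase h))
  have h2 : e₂ ∈ E.erase e₁ := mem_erase.mpr ⟨fun h => h12 h.symm, he₂⟩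
  have k1 := card_filter_erase' (E.erase e₁) e₂ h2 P
  have k2 := card_filter_erase' E e₁ he₁ P
  rw [card_filter_insert' _ _ hp' P, card_filter_insert' _ _ hq' P]
  omega

private lemma sum_projAB (E : Finset (A × B × C)) (a : A) :
    ∑ b : B, projAB E a b = hDegA E a := by
  have h := card_eq_sum_card_fiberwise
    (s := E.filter fun e => e.1 = a) (t := (univ : Finset B)) (f := fun e => e.2.1)
    (fun x _ => mem_univ _)
  unfold hDegA projAB
  rw [h]
  exact (sum_congr rfl fun b _ => by rw [filter_filter]).symm

private lemma projAB_fiber (E : Finset (A × B × C)) (a : A) (b : B) :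
    projAB E a b = (univ.filter fun c : C => (a, b, c) ∈ E).card := by
  unfold projAB
  have : E.filter (fun e => e.1 = a ∧ e.2.1 = b)
      = (univ.filter fun c : C => (a, b, c) ∈ E).image (fun c => (a, b, c)) := by
    ext ⟨a', b', c'⟩
    simp only [mem_filter, mem_image, mem_univ, true_and, Prod.mk.injEq]
    constructor
    · rintro ⟨hE, rfl, rfl⟩; exact ⟨c', hE, rfl, rfl, rfl⟩
    · rintro ⟨c, hc, rfl, rfl, rfl⟩; exact ⟨hc, rfl, rfl⟩
  rw [this, card_image_of_injective _ (fun x y h => by simpa using h)]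

private def Phi (E : Finset (A × B × C)) : ℕ := ∑ a : A, ∑ b : B, (projAB E a b) ^ 2

private lemma switch_of_not_balanced (dA : A → ℕ) (k : ℕ)
    (hreg : ∀ a : A, dA a = k ∨ dA a + 1 = k)
    (E : Finset (A × B × C)) (hA : ∀ a, hDegA E a = dA a)
    (hnb : ¬ BBalanced E) :
    ∃ E', IsSwitch E E' ∧ Phi E' < Phi E ∧
      (∀ a, hDegA E' a = hDegA E a) ∧ (∀ b, hDegB E' b = hDegB E b) ∧
      (∀ c, hDegC E' c = hDegC E c) := by
  unfold BBalanced at hnb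
  push_neg at hnb
  obtain ⟨b, hb⟩ := hnb
  obtain ⟨a₀, -⟩ := hb 0
  have hAne : (univ : Finset A).Nonempty := ⟨a₀, mem_univ _⟩
  obtain ⟨a₁, -, hmax⟩ := Finset.exists_max_image univ (fun a => projAB E a b) hAne
  obtain ⟨a₂, h2a, h2b⟩ := hb (projAB E a₁ b)
  have hx : projAB E a₂ b + 2 ≤ projAB E a₁ b := by
    have := hmax a₂ (mem_univ _); omega
  have hane : a₁ ≠ a₂ := by intro h; rw [h] at hx; omega
  have hane' : a₂ ≠ a₁ := hane.symm
  -- find b₂ with projAB E a₁ b₂ < projAB E a₂ b₂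
  have hsum1 : projAB E a₁ b + ∑ b' ∈ univ.erase b, projAB E a₁ b' = dA a₁ := by
    rw [← hA a₁, ← sum_projAB]; exact Finset.add_sum_erase _ _ (mem_univ b)
  have hsum2 : projAB E a₂ b + ∑ b' ∈ univ.erase b, projAB E a₂ b' = dA a₂ := by
    rw [← hA a₂, ← sum_projAB]; exact Finset.add_sum_erase _ _ (mem_univ b)
  have hb2 : ∃ b₂ ∈ univ.erase b, projAB E a₁ b₂ < projAB E a₂ b₂ := by
    by_contra h
    push_neg at h
    have hle : ∑ b' ∈ univ.erase b, projAB E a₂ b' ≤ ∑ b' ∈ univ.erase b, projAB E a₁ b' :=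
      sum_le_sum fun i hi => h i hi
    have r1 := hreg a₁; have r2 := hreg a₂
    omega
  obtain ⟨b₂, hb₂mem, huv⟩ := hb2
  have hbne : b₂ ≠ b := (mem_erase.mp hb₂mem).1
  have hbne' : b ≠ b₂ := hbne.symm
  -- find c₁
  have hcard1 : (univ.filter fun c : C => (a₂, b, c) ∈ E).card
      < (univ.filter fun c : C => (a₁, b, c) ∈ E).card := by
    rw [← projAB_fiber, ← projAB_fiber]; omega
  obtain ⟨c₁, hc₁m, hc₁'m⟩ := not_subset.mp
    (fun h => absurd (card_le_card h) (by omega) :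
      ¬ (univ.filter fun c : C => (a₁, b, c) ∈ E) ⊆ univ.filter fun c : C => (a₂, b, c) ∈ E)
  simp only [mem_filter, mem_univ, true_and] at hc₁m hc₁'m
  -- find c₂
  have hcard2 : (univ.filter fun c : C => (a₁, b₂, c) ∈ E).card
      < (univ.filter fun c : C => (a₂, b₂, c) ∈ E).card := by
    rw [← projAB_fiber, ← projAB_fiber]; omega
  obtain ⟨c₂, hc₂m, hc₂'m⟩ := not_subset.mp
    (fun h => absurd (card_le_card h) (by omega) :
      ¬ (univ.filter fun c : C => (a₂, b₂, c) ∈ E) ⊆ univ.filter fun c : C => (a₁, b₂, c) ∈ E)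
  simp only [mem_filter, mem_univ, true_and] at hc₂m hc₂'m
  have h12 : ((a₁, b, c₁) : A × B × C) ≠ (a₂, b₂, c₂) := by
    intro h; exact hane (congrArg Prod.fst h)
  have hpq : ((a₂, b, c₁) : A × B × C) ≠ (a₁, b₂, c₂) := by
    intro h; exact hane' (congrArg Prod.fst h)
  refine ⟨insert (a₂, b, c₁) (insert (a₁, b₂, c₂)
      ((E.erase (a₁, b, c₁)).erase (a₂, b₂, c₂))), ?_, ?_, ?_, ?_, ?_⟩
  case _ => exact Or.inl ⟨a₁, a₂, b, c₁, b₂, c₂, hc₁m, hc₂m, hc₁'m, hc₂'m, rfl⟩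
  -- abbreviation
  case _ =>
    -- Phi decreases
    set E' := insert (a₂, b, c₁) (insert (a₁, b₂, c₂)
      ((E.erase (a₁, b, c₁)).erase (a₂, b₂, c₂))) with hE'
    have key : ∀ a' b', projAB E' a' b' + (if a₁ = a' ∧ b = b' then 1 else 0)
        + (if a₂ = a' ∧ b₂ = b' then 1 else 0)
        = projAB E a' b' + (if a₂ = a' ∧ b = b' then 1 else 0)
        + (if a₁ = a' ∧ b₂ = b' then 1 else 0) := by
      intro a' b'
      have h := card_filter_switch E (a₁, b, c₁) (a₂, b₂, c₂) (a₂, b, c₁) (a₁, b₂, c₂)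
        hc₁m hc₂m hc₁'m hc₂'m h12 hpq (fun e => e.1 = a' ∧ e.2.1 = b')
      exact h
    have keyne : ∀ a' b', (a' ≠ a₁ ∨ b' ≠ b) → (a' ≠ a₂ ∨ b' ≠ b₂) →
        (a' ≠ a₂ ∨ b' ≠ b) → (a' ≠ a₁ ∨ b' ≠ b₂) → projAB E' a' b' = projAB E a' b' := by
      intro a' b' h1 h2 h3 h4
      have h := key a' b'
      rw [if_neg (by rintro ⟨rfl, rfl⟩; tauto), if_neg (by rintro ⟨rfl, rfl⟩; tauto),
        if_neg (by rintro ⟨rfl, rfl⟩; tauto), if_neg (by rintro ⟨rfl, rfl⟩; tauto)] at h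
      omega
    have k1 := key a₁ b
    have k2 := key a₂ b
    have k3 := key a₁ b₂
    have k4 := key a₂ b₂
    simp only [if_pos (⟨rfl, rfl⟩ : a₁ = a₁ ∧ b = b), hane, hane', hbne, hbne',
      and_true, and_false, false_and, true_and, if_false, if_true, iff_true, ne_eq,
      if_neg, reduceIte] at k1 k2 k3 k4
    have splitB : ∀ (g : B → ℕ), ∑ b' : B, g b'
        = g b + g b₂ + ∑ b' ∈ (univ.erase b).erase b₂, g b' := by
      intro g
      rw [← Finset.add_sum_erase univ g (mem_univ b), ← Finset.add_sum_erase _ g hb₂mem]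
      omega
    have ha₂mem : a₂ ∈ univ.erase a₁ := mem_erase.mpr ⟨hane', mem_univ a₂⟩
    have splitA : ∀ (g : A → ℕ), ∑ a : A, g a
        = g a₁ + g a₂ + ∑ a ∈ (univ.erase a₁).erase a₂, g a := by
      intro g
      rw [← Finset.add_sum_erase univ g (mem_univ a₁), ← Finset.add_sum_erase _ g ha₂mem]
      omega
    have hSb : ∑ a ∈ (univ.erase a₁).erase a₂, ∑ b' : B, (projAB E' a b') ^ 2
        = ∑ a ∈ (univ.erase a₁).erase a₂, ∑ b' : B, (projAB E a b') ^ 2 := by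
      refine sum_congr rfl fun a' ha' => sum_congr rfl fun b' _ => ?_
      have h2 : a' ≠ a₂ := (mem_erase.mp ha').1
      have h1 : a' ≠ a₁ := (mem_erase.mp (mem_erase.mp ha').2).1
      rw [keyne _ _ (Or.inl h1) (Or.inl h2) (Or.inl h2) (Or.inl h1)]
    have hS1 : ∑ b' ∈ (univ.erase b).erase b₂, (projAB E' a₁ b') ^ 2
        = ∑ b' ∈ (univ.erase b).erase b₂, (projAB E a₁ b') ^ 2 := by
      refine sum_congr rfl fun b' hb' => ?_
      have h2 : b' ≠ b₂ := (mem_erase.mp hb').1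
      have h1 : b' ≠ b := (mem_erase.mp (mem_erase.mp hb').2).1
      rw [keyne _ _ (Or.inr h1) (Or.inr h2) (Or.inr h1) (Or.inr h2)]
    have hS2 : ∑ b' ∈ (univ.erase b).erase b₂, (projAB E' a₂ b') ^ 2
        = ∑ b' ∈ (univ.erase b).erase b₂, (projAB E a₂ b') ^ 2 := by
      refine sum_congr rfl fun b' hb' => ?_
      have h2 : b' ≠ b₂ := (mem_erase.mp hb').1
      have h1 : b' ≠ b := (mem_erase.mp (mem_erase.mp hb').2).1
      rw [keyne _ _ (Or.inr h1) (Or.inr h2) (Or.inr h1) (Or.inr h2)]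
    unfold Phi
    rw [splitA (fun a => ∑ b' : B, (projAB E' a b') ^ 2),
      splitA (fun a => ∑ b' : B, (projAB E a b') ^ 2)]
    rw [splitB (fun b' => (projAB E' a₁ b') ^ 2), splitB (fun b' => (projAB E a₁ b') ^ 2),
      splitB (fun b' => (projAB E' a₂ b') ^ 2), splitB (fun b' => (projAB E a₂ b') ^ 2)]
    rw [hSb, hS1, hS2]
    nlinarith [k1, k2, k3, k4, hx, huv, sq_nonneg (projAB E a₁ b), sq_nonneg (projAB E a₂ b₂)]
  case _ =>
    intro a
    have h := card_filter_switch E (a₁, b, c₁) (a₂, b₂, c₂) (a₂, b, c₁) (a₁, b₂, c₂)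
      hc₁m hc₂m hc₁'m hc₂'m h12 hpq (fun e => e.1 = a)
    simp only at h
    unfold hDegA
    split_ifs at h <;> omega
  case _ =>
    intro b'
    have h := card_filter_switch E (a₁, b, c₁) (a₂, b₂, c₂) (a₂, b, c₁) (a₁, b₂, c₂)
      hc₁m hc₂m hc₁'m hc₂'m h12 hpq (fun e => e.2.1 = b')
    simp only at h
    unfold hDegB
    split_ifs at h <;> omega
  case _ =>
    intro c
    have h := card_filter_switch E (a₁, b, c₁) (a₂, b₂, c₂) (a₂, b, c₁) (a₁, b₂, c₂)
      hc₁m hc₂m hc₁'m hc₂'m h12 hpq (fun e => e.2.2 = c)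
    simp only at h
    unfold hDegC
    split_ifs at h <;> omega

private lemma main_aux (dA : A → ℕ) (dB : B → ℕ) (dC : C → ℕ) (k : ℕ)
    (hreg : ∀ a : A, dA a = k ∨ dA a + 1 = k) :
    ∀ n (E : Finset (A × B × C)), Phi E = n →
    (∀ a, hDegA E a = dA a) → (∀ b, hDegB E b = dB b) → (∀ c, hDegC E c = dC c) →
    ∃ E', Relation.ReflTransGen IsSwitch E E' ∧
      (∀ a, hDegA E' a = dA a) ∧ (∀ b, hDegB E' b = dB b) ∧
      (∀ c, hDegC E' c = dC c) ∧ BBalanced E' := by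
  intro n
  induction n using Nat.strong_induction_on with
  | _ n ih =>
    intro E hPhi hA hB hC
    by_cases hb : BBalanced E
    · exact ⟨E, Relation.ReflTransGen.refl, hA, hB, hC, hb⟩
    · obtain ⟨E'', hsw, hlt, hA', hB', hC'⟩ := switch_of_not_balanced dA k hreg E hA hb
      obtain ⟨E', hrt, h1, h2, h3, h4⟩ := ih (Phi E'') (hPhi ▸ hlt) E'' rfl
        (fun a => (hA' a).trans (hA a)) (fun b => (hB' b).trans (hB b))
        (fun c => (hC' c).trans (hC c))
      exact ⟨E', Relation.ReflTransGen.head hsw hrt, h1, h2, h3, h4⟩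


/-- if a third almost-regular degree sequence `D = (D_A, D_B, D_C)` has a
realization `H`, then it also has a realization `H'` whose `(A,B)`-projection is
`B`-balanced, and `H'` can be obtained from `H` by a finite series of switches. -/
theorem third_almost_regular_balanced_realization
    (dA : A → ℕ) (dB : B → ℕ) (dC : C → ℕ) (k : ℕ)
    (hreg : ∀ a : A, dA a = k ∨ dA a + 1 = k)
    (H : Finset (A × B × C))
    (hHA : ∀ a, hDegA H a = dA a) (hHB : ∀ b, hDegB H b = dB b)
    (hHC : ∀ c, hDegC H c = dC c) :
    ∃ H' : Finset (A × B × C),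
      Relation.ReflTransGen IsSwitch H H' ∧
      (∀ a, hDegA H' a = dA a) ∧ (∀ b, hDegB H' b = dB b) ∧
      (∀ c, hDegC H' c = dC c) ∧ BBalanced H' := by
  exact main_aux dA dB dC k hreg (Phi H) H rfl hHA hHB hHC
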